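/- For every n ≥ 1, P(ξ_{α_n} = 1 and α_n < ∞) = P(ξ_{α_n} = −1 and α_n < ∞) = (1/2)·P(α_n < ∞), and likewise P(ξ_{β_n} = 1 and β_n < ∞) = P(ξ_{β_n} = −1 and β_n < ∞) = (1/2)·P(β_n < ∞). (Here, on {α_n = i < ∞}, ξ_{α_n} means ξ_i.) -/

import Mathlib

open MeasureTheory ProbabilityTheory Filter Set

noncomputable section

variable {Ω : Type*}

/-- `Q n = 1` if the `n`-th moves agree, `0` if they are opposite. -/
def Qproc (ξ η : ℕ → Ω → ℝ) (n : ℕ) (ω : Ω) : ℕ :=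
  if ξ n ω = η n ω then 1 else 0

/-- `T n = ∑_{k=1}^n Q k`, the number of common movements up to step `n`. -/
def Tproc (ξ η : ℕ → Ω → ℝ) (n : ℕ) (ω : Ω) : ℕ :=
  ∑ k ∈ Finset.Icc 1 n, Qproc ξ η k ω

/-- `S n = n - T n`, the number of counter movements up to step `n`. -/
def Sproc (ξ η : ℕ → Ω → ℝ) (n : ℕ) (ω : Ω) : ℕ :=
  n - Tproc ξ η n ω

/-- `α n = inf {k ≥ 1 : T k = n}`, with `inf ∅ = ⊤`, valued in `ℕ∞`. -/
def alphaProc (ξ η : ℕ → Ω → ℝ) (n : ℕ) (ω : Ω) : ℕ∞ :=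
  ⨅ (k : ℕ) (_ : 1 ≤ k ∧ Tproc ξ η k ω = n), (k : ℕ∞)

/-- `β n = inf {k ≥ 1 : S k = n}`, with `inf ∅ = ⊤`, valued in `ℕ∞`. -/
def betaProc (ξ η : ℕ → Ω → ℝ) (n : ℕ) (ω : Ω) : ℕ∞ :=
  ⨅ (k : ℕ) (_ : 1 ≤ k ∧ Sproc ξ η k ω = n), (k : ℕ∞)

/-- `ξ̃_{α n}`: equal to `ξ_i` on `{α n = i}` (`i < ∞`) and to `ζ n` on `{α n = ∞}`. -/
def xiAlpha (ξ η ζ : ℕ → Ω → ℝ) (n : ℕ) (ω : Ω) : ℝ :=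
  if alphaProc ξ η n ω = ⊤ then ζ n ω else ξ (alphaProc ξ η n ω).toNat ω

/-- `ξ̃_{β m}`: equal to `ξ_i` on `{β m = i}` (`i < ∞`) and to `ψ m` on `{β m = ∞}`. -/
def xiBeta (ξ η ψ : ℕ → Ω → ℝ) (m : ℕ) (ω : Ω) : ℝ :=
  if betaProc ξ η m ω = ⊤ then ψ m ω else ξ (betaProc ξ η m ω).toNat ω

/-- The common-movement walk `X n = ∑_{i=1}^n ξ̃_{α i}`. -/
def Xproc (ξ η ζ : ℕ → Ω → ℝ) (n : ℕ) (ω : Ω) : ℝ :=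
  ∑ i ∈ Finset.Icc 1 n, xiAlpha ξ η ζ i ω

/-- The counter-movement walk `Y n = ∑_{i=1}^n ξ̃_{β i}`. -/
def Yproc (ξ η ψ : ℕ → Ω → ℝ) (n : ℕ) (ω : Ω) : ℝ :=
  ∑ i ∈ Finset.Icc 1 n, xiBeta ξ η ψ i ω

variable {ξ η : ℕ → Ω → ℝ}

lemma Qproc_le_one (k : ℕ) (ω : Ω) : Qproc ξ η k ω ≤ 1 := by
  unfold Qproc; split <;> simp

lemma Tproc_zero (ω : Ω) : Tproc ξ η 0 ω = 0 := by simp [Tproc]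

lemma Tproc_succ (k : ℕ) (ω : Ω) :
    Tproc ξ η (k+1) ω = Tproc ξ η k ω + Qproc ξ η (k+1) ω := by
  unfold Tproc
  rw [Finset.sum_Icc_succ_top (by omega)]

lemma Tproc_le (k : ℕ) (ω : Ω) : Tproc ξ η k ω ≤ k := by
  induction k with
  | zero => simp [Tproc_zero]
  | succ k ih => rw [Tproc_succ]; have := Qproc_le_one (ξ := ξ) (η := η) (k+1) ω; omega

lemma Tproc_mono (ω : Ω) : Monotone (fun k => Tproc ξ η k ω) :=
  monotone_nat_of_le_succ fun k => by rw [Tproc_succ]; omega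

lemma Sproc_zero (ω : Ω) : Sproc ξ η 0 ω = 0 := by simp [Sproc]

lemma Sproc_succ (k : ℕ) (ω : Ω) :
    Sproc ξ η (k+1) ω = Sproc ξ η k ω + (1 - Qproc ξ η (k+1) ω) := by
  unfold Sproc
  rw [Tproc_succ]
  have h1 := Tproc_le (ξ := ξ) (η := η) k ω
  have h2 := Qproc_le_one (ξ := ξ) (η := η) (k+1) ω
  omega

lemma Sproc_mono (ω : Ω) : Monotone (fun k => Sproc ξ η k ω) :=
  monotone_nat_of_le_succ fun k => by rw [Sproc_succ]; omega

lemma iInf_eq_coe_iff {p : ℕ → Prop} [DecidablePred p] {m : ℕ} :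
    (⨅ (k : ℕ) (_ : p k), (k : ℕ∞)) = (m : ℕ∞) ↔ p m ∧ ∀ j, p j → m ≤ j := by
  constructor
  · intro h
    have hne : ∃ k, p k := by
      by_contra hc
      push_neg at hc
      have : (⨅ (k : ℕ) (_ : p k), (k : ℕ∞)) = ⊤ := by simp [hc]
      rw [h] at this
      exact (WithTop.coe_ne_top this)
    have h2 : (⨅ (k : ℕ) (_ : p k), (k : ℕ∞)) = (Nat.find hne : ℕ∞) := by
      refine le_antisymm (iInf₂_le _ (Nat.find_spec hne)) (le_iInf₂ fun j hj => ?_)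
      exact_mod_cast Nat.find_min' hne hj
    rw [h] at h2
    have hm : m = Nat.find hne := by exact_mod_cast h2
    subst hm
    exact ⟨Nat.find_spec hne, fun j hj => Nat.find_min' hne hj⟩
  · rintro ⟨h1, h2⟩
    refine le_antisymm (iInf₂_le _ h1) (le_iInf₂ fun j hj => ?_)
    exact_mod_cast h2 j hj

lemma Qproc_eq_one_iff {k : ℕ} {ω : Ω} : Qproc ξ η k ω = 1 ↔ ξ k ω = η k ω := by
  unfold Qproc; split <;> simp_all

lemma alpha_eq_succ_iff {n : ℕ} (hn : 1 ≤ n) {k : ℕ} {ω : Ω} :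
    alphaProc ξ η n ω = ((k+1 : ℕ) : ℕ∞) ↔
      (Tproc ξ η k ω = n - 1 ∧ ξ (k+1) ω = η (k+1) ω) := by
  rw [alphaProc, iInf_eq_coe_iff]
  constructor
  · rintro ⟨⟨-, hT⟩, hmin⟩
    rw [Tproc_succ] at hT
    have hQ : Qproc ξ η (k+1) ω = 1 := by
      by_contra h
      have hQ0 : Qproc ξ η (k+1) ω = 0 := by
        have := Qproc_le_one (ξ := ξ) (η := η) (k+1) ω; omega
      have hTk : Tproc ξ η k ω = n := by omega
      rcases Nat.eq_zero_or_pos k with hk | hk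
      · subst hk; rw [Tproc_zero] at hTk; omega
      · have := hmin k ⟨hk, hTk⟩; omega
    exact ⟨by omega, Qproc_eq_one_iff.mp hQ⟩
  · rintro ⟨hT, hξη⟩
    have hQ : Qproc ξ η (k+1) ω = 1 := Qproc_eq_one_iff.mpr hξη
    have hTk1 : Tproc ξ η (k+1) ω = n := by rw [Tproc_succ]; omega
    refine ⟨⟨by omega, hTk1⟩, fun j hj => ?_⟩
    by_contra h
    push_neg at h
    have hjk : j ≤ k := by omega
    have := Tproc_mono (ξ := ξ) (η := η) ω hjk
    simp only at this
    omega

lemma beta_eq_succ_iff {n : ℕ} (hn : 1 ≤ n) {k : ℕ} {ω : Ω} :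
    betaProc ξ η n ω = ((k+1 : ℕ) : ℕ∞) ↔
      (Sproc ξ η k ω = n - 1 ∧ ξ (k+1) ω ≠ η (k+1) ω) := by
  rw [betaProc, iInf_eq_coe_iff]
  constructor
  · rintro ⟨⟨-, hS⟩, hmin⟩
    rw [Sproc_succ] at hS
    have hQ : Qproc ξ η (k+1) ω = 0 := by
      by_contra h
      have hQ1 : Qproc ξ η (k+1) ω = 1 := by
        have := Qproc_le_one (ξ := ξ) (η := η) (k+1) ω; omega
      have hSk : Sproc ξ η k ω = n := by omega
      rcases Nat.eq_zero_or_pos k with hk | hk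
      · subst hk; rw [Sproc_zero] at hSk; omega
      · have := hmin k ⟨hk, hSk⟩; omega
    refine ⟨by omega, ?_⟩
    intro hc
    rw [Qproc_eq_one_iff.mpr hc] at hQ; omega
  · rintro ⟨hS, hξη⟩
    have hQ : Qproc ξ η (k+1) ω = 0 := by
      unfold Qproc; split
      · exact absurd ‹_› hξη
      · rfl
    have hSk1 : Sproc ξ η (k+1) ω = n := by rw [Sproc_succ]; omega
    refine ⟨⟨by omega, hSk1⟩, fun j hj => ?_⟩
    by_contra h
    push_neg at h
    have hjk : j ≤ k := by omega
    have := Sproc_mono (ξ := ξ) (η := η) ω hjk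
    simp only at this
    omega

lemma alpha_ne_zero {n : ℕ} (hn : 1 ≤ n) (ω : Ω) : alphaProc ξ η n ω ≠ (0 : ℕ) := by
  intro h
  rw [alphaProc, iInf_eq_coe_iff] at h
  exact absurd h.1.1 (by omega)

lemma beta_ne_zero {n : ℕ} (hn : 1 ≤ n) (ω : Ω) : betaProc ξ η n ω ≠ (0 : ℕ) := by
  intro h
  rw [betaProc, iInf_eq_coe_iff] at h
  exact absurd h.1.1 (by omega)

lemma half_of_condExp {Ω : Type*} {m : MeasurableSpace Ω} [mΩ : MeasurableSpace Ω]
    (P : Measure Ω) [IsProbabilityMeasure P]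
    (hm : m ≤ mΩ) {A B : Set Ω}
    (hA : MeasurableSet[mΩ] A) (hB : MeasurableSet[m] B)
    (h : P[A.indicator (fun _ => (1 : ℝ)) | m] =ᵐ[P] fun _ => 1 / 2) :
    P (B ∩ A) = 2⁻¹ * P B := by
  have hf : Integrable (A.indicator fun _ => (1 : ℝ)) P :=
    (integrable_const 1).indicator hA
  have h1 : ∫ ω in B, A.indicator (fun _ => (1 : ℝ)) ω ∂P
      = ∫ ω in B, ((fun _ => (1:ℝ)/2) ω) ∂P := by
    rw [← setIntegral_condExp hm hf hB]
    exact integral_congr_ae (ae_restrict_of_ae h)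
  rw [setIntegral_indicator hA] at h1
  simp only [setIntegral_const, smul_eq_mul, mul_one] at h1
  have hBA : P (B ∩ A) ≠ ⊤ := measure_ne_top P _
  have hB' : 2⁻¹ * P B ≠ ⊤ :=
    ENNReal.mul_ne_top (by simp) (measure_ne_top P _)
  rw [← ENNReal.toReal_eq_toReal_iff' hBA hB', ← measureReal_def, h1, ENNReal.toReal_mul]
  simp [ENNReal.toReal_inv, measureReal_def]
  ring

lemma split_pm {Ω : Type*} [mΩ : MeasurableSpace Ω] (P : Measure Ω) {X : Set Ω}
    (hX : MeasurableSet X) {g : Ω → ℝ}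
    (hg : ∀ ω, g ω = 1 ∨ g ω = -1)
    (h2 : MeasurableSet {ω | g ω = -1}) :
    P X = P (X ∩ {ω | g ω = 1}) + P (X ∩ {ω | g ω = -1}) := by
  have hd : Disjoint (X ∩ {ω | g ω = 1}) (X ∩ {ω | g ω = -1}) := by
    refine Set.disjoint_left.mpr ?_
    rintro ω ⟨-, h1'⟩ ⟨-, h2'⟩
    simp only [mem_setOf_eq] at h1' h2'
    rw [h1'] at h2'; norm_num at h2'
  rw [← measure_union hd (hX.inter h2)]
  congr 1
  ext ω
  constructor
  · intro hx
    rcases hg ω with h | h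
    · exact Or.inl ⟨hx, h⟩
    · exact Or.inr ⟨hx, h⟩
  · rintro (⟨hx, -⟩ | ⟨hx, -⟩) <;> exact hx

lemma sym_agree {Ω : Type*} {m : MeasurableSpace Ω} [mΩ : MeasurableSpace Ω]
    (P : Measure Ω) [IsProbabilityMeasure P] (hm : m ≤ mΩ)
    {B : Set Ω} (hB : MeasurableSet[m] B) {f g : Ω → ℝ}
    (hfv : ∀ ω, f ω = 1 ∨ f ω = -1) (hgv : ∀ ω, g ω = 1 ∨ g ω = -1)
    (hfmeas : ∀ c : ℝ, MeasurableSet {ω | f ω = c})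
    (hgmeas : ∀ c : ℝ, MeasurableSet {ω | g ω = c})
    (hf1 : P[({ω | f ω = 1}).indicator (fun _ => (1 : ℝ)) | m] =ᵐ[P] fun _ => 1 / 2)
    (hgm1 : P[({ω | g ω = -1}).indicator (fun _ => (1 : ℝ)) | m] =ᵐ[P] fun _ => 1 / 2) :
    P (B ∩ {ω | f ω = 1} ∩ {ω | g ω = 1}) = P (B ∩ {ω | f ω = -1} ∩ {ω | g ω = -1}) := by
  have e1 : P (B ∩ {ω | f ω = 1}) = 2⁻¹ * P B := half_of_condExp P hm (hfmeas 1) hB hf1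
  have e2 : P (B ∩ {ω | g ω = -1}) = 2⁻¹ * P B := half_of_condExp P hm (hgmeas (-1)) hB hgm1
  have s1 := split_pm P ((hm B hB).inter (hfmeas 1)) hgv (hgmeas (-1))
  have s2 := split_pm P ((hm B hB).inter (hgmeas (-1))) hfv (hfmeas (-1))
  rw [Set.inter_right_comm B {ω | g ω = -1} {ω | f ω = 1},
      Set.inter_right_comm B {ω | g ω = -1} {ω | f ω = -1}] at s2
  rw [e1] at s1
  rw [e2] at s2
  have hc : P (B ∩ {ω | f ω = 1} ∩ {ω | g ω = -1}) ≠ ⊤ := measure_ne_top P _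
  exact WithTop.add_right_cancel hc (s1.symm.trans (s2.trans (add_comm _ _)))

lemma sym_disagree {Ω : Type*} {m : MeasurableSpace Ω} [mΩ : MeasurableSpace Ω]
    (P : Measure Ω) [IsProbabilityMeasure P] (hm : m ≤ mΩ)
    {B : Set Ω} (hB : MeasurableSet[m] B) {f g : Ω → ℝ}
    (hfv : ∀ ω, f ω = 1 ∨ f ω = -1) (hgv : ∀ ω, g ω = 1 ∨ g ω = -1)
    (hfmeas : ∀ c : ℝ, MeasurableSet {ω | f ω = c})
    (hgmeas : ∀ c : ℝ, MeasurableSet {ω | g ω = c})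
    (hf1 : P[({ω | f ω = 1}).indicator (fun _ => (1 : ℝ)) | m] =ᵐ[P] fun _ => 1 / 2)
    (hg1 : P[({ω | g ω = 1}).indicator (fun _ => (1 : ℝ)) | m] =ᵐ[P] fun _ => 1 / 2) :
    P (B ∩ {ω | f ω = 1} ∩ {ω | g ω = -1}) = P (B ∩ {ω | f ω = -1} ∩ {ω | g ω = 1}) := by
  have e1 : P (B ∩ {ω | f ω = 1}) = 2⁻¹ * P B := half_of_condExp P hm (hfmeas 1) hB hf1
  have e2 : P (B ∩ {ω | g ω = 1}) = 2⁻¹ * P B := half_of_condExp P hm (hgmeas 1) hB hg1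
  have s1 := split_pm P ((hm B hB).inter (hfmeas 1)) hgv (hgmeas (-1))
  have s2 := split_pm P ((hm B hB).inter (hgmeas 1)) hfv (hfmeas (-1))
  rw [Set.inter_right_comm B {ω | g ω = 1} {ω | f ω = 1},
      Set.inter_right_comm B {ω | g ω = 1} {ω | f ω = -1}] at s2
  rw [e1] at s1
  rw [e2] at s2
  have hc : P (B ∩ {ω | f ω = 1} ∩ {ω | g ω = 1}) ≠ ⊤ := measure_ne_top P _
  have h1 : P (B ∩ {ω | f ω = 1} ∩ {ω | g ω = -1}) + P (B ∩ {ω | f ω = 1} ∩ {ω | g ω = 1})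
      = 2⁻¹ * P B := by rw [add_comm]; exact s1.symm
  have h2 : P (B ∩ {ω | f ω = -1} ∩ {ω | g ω = 1}) + P (B ∩ {ω | f ω = 1} ∩ {ω | g ω = 1})
      = 2⁻¹ * P B := by rw [add_comm]; exact s2.symm
  exact WithTop.add_right_cancel hc (h1.trans h2.symm)

lemma assemble {Ω : Type*} [mΩ : MeasurableSpace Ω] (P : Measure Ω) [IsProbabilityMeasure P]
    (τ : Ω → ℕ∞) (ξ : ℕ → Ω → ℝ)
    (hτ0 : ∀ ω, τ ω ≠ ((0 : ℕ) : ℕ∞))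
    (hτmeas : ∀ k : ℕ, MeasurableSet {ω | τ ω = (k : ℕ∞)})
    (hξv : ∀ k ω, ξ k ω = 1 ∨ ξ k ω = -1)
    (hξmeas : ∀ (k : ℕ) (c : ℝ), MeasurableSet {ω | ξ (k+1) ω = c})
    (hsym : ∀ k : ℕ, P ({ω | τ ω = ((k+1 : ℕ) : ℕ∞)} ∩ {ω | ξ (k+1) ω = 1})
      = P ({ω | τ ω = ((k+1 : ℕ) : ℕ∞)} ∩ {ω | ξ (k+1) ω = -1})) :
    P {ω | τ ω ≠ ⊤ ∧ ξ (τ ω).toNat ω = 1} = 2⁻¹ * P {ω | τ ω ≠ ⊤} ∧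
    P {ω | τ ω ≠ ⊤ ∧ ξ (τ ω).toNat ω = -1} = 2⁻¹ * P {ω | τ ω ≠ ⊤} := by
  have hdecomp : ∀ c : ℝ, {ω | τ ω ≠ ⊤ ∧ ξ (τ ω).toNat ω = c}
      = ⋃ k : ℕ, ({ω | τ ω = ((k+1 : ℕ) : ℕ∞)} ∩ {ω | ξ (k+1) ω = c}) := by
    intro c
    ext ω
    simp only [mem_iUnion, mem_inter_iff, mem_setOf_eq]
    constructor
    · rintro ⟨hne, hc⟩
      obtain ⟨m, hm⟩ := WithTop.ne_top_iff_exists.mp hne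
      obtain ⟨k, rfl⟩ := Nat.exists_eq_succ_of_ne_zero (n := m)
        (fun h => hτ0 ω (by rw [h] at hm; exact hm.symm))
      refine ⟨k, hm.symm, ?_⟩
      rw [← hm] at hc
      exact hc
    · rintro ⟨k, hk, hc⟩
      rw [hk]
      exact ⟨ENat.coe_ne_top _, by rwa [ENat.toNat_coe]⟩
  have hdTop : {ω | τ ω ≠ ⊤} = ⋃ k : ℕ, {ω | τ ω = ((k+1 : ℕ) : ℕ∞)} := by
    ext ω
    simp only [mem_iUnion, mem_setOf_eq]
    constructor
    · intro hne
      obtain ⟨m, hm⟩ := WithTop.ne_top_iff_exists.mp hne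
      obtain ⟨k, rfl⟩ := Nat.exists_eq_succ_of_ne_zero (n := m)
        (fun h => hτ0 ω (by rw [h] at hm; exact hm.symm))
      exact ⟨k, hm.symm⟩
    · rintro ⟨k, hk⟩
      rw [hk]; exact ENat.coe_ne_top _
  have hdisj : ∀ (s : ℕ → Set Ω), (∀ k, s k ⊆ {ω | τ ω = ((k+1 : ℕ) : ℕ∞)}) →
      Pairwise (Function.onFun Disjoint s) := by
    intro s hs i j hij
    refine Set.disjoint_left.mpr fun ω hi hj => ?_
    have h1 := hs i hi
    have h2 := hs j hj
    simp only [mem_setOf_eq] at h1 h2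
    rw [h1] at h2
    have h3 : i + 1 = j + 1 := by exact_mod_cast h2
    exact hij (by omega)
  have hmeas : ∀ (k : ℕ) (c : ℝ),
      MeasurableSet ({ω | τ ω = ((k+1 : ℕ) : ℕ∞)} ∩ {ω | ξ (k+1) ω = c}) :=
    fun k c => (hτmeas (k+1)).inter (hξmeas k c)
  have hsum : ∀ c : ℝ, P {ω | τ ω ≠ ⊤ ∧ ξ (τ ω).toNat ω = c}
      = ∑' k : ℕ, P ({ω | τ ω = ((k+1 : ℕ) : ℕ∞)} ∩ {ω | ξ (k+1) ω = c}) := by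
    intro c
    rw [hdecomp c]
    exact measure_iUnion (hdisj _ fun k => Set.inter_subset_left) (fun k => hmeas k c)
  have htot : P {ω | τ ω ≠ ⊤} = ∑' k : ℕ, P {ω | τ ω = ((k+1 : ℕ) : ℕ∞)} := by
    rw [hdTop]
    exact measure_iUnion (hdisj _ fun k => subset_rfl) (fun k => hτmeas (k+1))
  have heq : P {ω | τ ω ≠ ⊤ ∧ ξ (τ ω).toNat ω = 1} = P {ω | τ ω ≠ ⊤ ∧ ξ (τ ω).toNat ω = -1} := by
    rw [hsum 1, hsum (-1)]
    exact tsum_congr hsym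
  have hadd : P {ω | τ ω ≠ ⊤ ∧ ξ (τ ω).toNat ω = 1} + P {ω | τ ω ≠ ⊤ ∧ ξ (τ ω).toNat ω = -1}
      = P {ω | τ ω ≠ ⊤} := by
    rw [hsum 1, hsum (-1), htot, ← ENNReal.tsum_add]
    refine tsum_congr fun k => ?_
    exact (split_pm P (hτmeas (k+1)) (hξv (k+1)) (hξmeas k (-1))).symm
  have key : P {ω | τ ω ≠ ⊤ ∧ ξ (τ ω).toNat ω = 1} = 2⁻¹ * P {ω | τ ω ≠ ⊤} := by
    rw [← hadd, ← heq, ← two_mul, ← mul_assoc, ENNReal.inv_mul_cancel two_ne_zero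
      (by norm_num), one_mul]
  exact ⟨key, heq ▸ key⟩


section MainAux

variable {Ω : Type*} [mΩ : MeasurableSpace Ω]

lemma Tproc_measurable (F : MeasureTheory.Filtration ℕ mΩ)
    {ξ η : ℕ → Ω → ℝ}
    (hξm : ∀ n, 1 ≤ n → Measurable[F n] (ξ n))
    (hηm : ∀ n, 1 ≤ n → Measurable[F n] (η n)) (k : ℕ) :
    Measurable[F k] (fun ω => Tproc ξ η k ω) := by
  unfold Tproc
  apply Finset.measurable_sum
  intro j hj
  simp only [Finset.mem_Icc] at hj
  have hjm : Measurable[F j] (fun ω => Qproc ξ η j ω) := by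
    unfold Qproc
    exact Measurable.ite (measurableSet_eq_fun (hξm j hj.1) (hηm j hj.1))
      measurable_const measurable_const
  exact hjm.mono (F.mono hj.2) le_rfl

end MainAux

theorem stmt_4
    {Ω : Type*} [mΩ : MeasurableSpace Ω] (P : Measure Ω) [IsProbabilityMeasure P]
    (F : MeasureTheory.Filtration ℕ mΩ) (hF0 : F 0 = ⊥)
    (ξ η : ℕ → Ω → ℝ)
    (hξm : ∀ n, 1 ≤ n → Measurable[F n] (ξ n))
    (hηm : ∀ n, 1 ≤ n → Measurable[F n] (η n))
    (hξv : ∀ n ω, ξ n ω = 1 ∨ ξ n ω = -1)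
    (hηv : ∀ n ω, η n ω = 1 ∨ η n ω = -1)
    (hhalf : ∀ n, 1 ≤ n →
      (P[({ω | ξ n ω = 1}).indicator (fun _ => (1 : ℝ)) | F (n - 1)] =ᵐ[P] fun _ => 1 / 2) ∧
      (P[({ω | ξ n ω = -1}).indicator (fun _ => (1 : ℝ)) | F (n - 1)] =ᵐ[P] fun _ => 1 / 2) ∧
      (P[({ω | η n ω = 1}).indicator (fun _ => (1 : ℝ)) | F (n - 1)] =ᵐ[P] fun _ => 1 / 2) ∧
      (P[({ω | η n ω = -1}).indicator (fun _ => (1 : ℝ)) | F (n - 1)] =ᵐ[P] fun _ => 1 / 2)) :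
    ∀ n : ℕ, 1 ≤ n →
      (P {ω | alphaProc ξ η n ω ≠ ⊤ ∧ ξ (alphaProc ξ η n ω).toNat ω = 1}
        = 2⁻¹ * P {ω | alphaProc ξ η n ω ≠ ⊤}) ∧
      (P {ω | alphaProc ξ η n ω ≠ ⊤ ∧ ξ (alphaProc ξ η n ω).toNat ω = -1}
        = 2⁻¹ * P {ω | alphaProc ξ η n ω ≠ ⊤}) ∧
      (P {ω | betaProc ξ η n ω ≠ ⊤ ∧ ξ (betaProc ξ η n ω).toNat ω = 1}
        = 2⁻¹ * P {ω | betaProc ξ η n ω ≠ ⊤}) ∧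
      (P {ω | betaProc ξ η n ω ≠ ⊤ ∧ ξ (betaProc ξ η n ω).toNat ω = -1}
        = 2⁻¹ * P {ω | betaProc ξ η n ω ≠ ⊤}) := by
  intro n hn
  -- generic measurability of level sets of ξ, η
  have hξset : ∀ (k : ℕ) (c : ℝ), 1 ≤ k → MeasurableSet {ω | ξ k ω = c} := by
    intro k c hk
    have : MeasurableSet[F k] {ω | ξ k ω = c} := hξm k hk (measurableSet_singleton c)
    exact F.le k _ this
  have hηset : ∀ (k : ℕ) (c : ℝ), 1 ≤ k → MeasurableSet {ω | η k ω = c} := by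
    intro k c hk
    have : MeasurableSet[F k] {ω | η k ω = c} := hηm k hk (measurableSet_singleton c)
    exact F.le k _ this
  -- condexp hypotheses at level F k for step k+1
  have hhalf' : ∀ k : ℕ,
      (P[({ω | ξ (k+1) ω = 1}).indicator (fun _ => (1 : ℝ)) | F k] =ᵐ[P] fun _ => 1 / 2) ∧
      (P[({ω | ξ (k+1) ω = -1}).indicator (fun _ => (1 : ℝ)) | F k] =ᵐ[P] fun _ => 1 / 2) ∧
      (P[({ω | η (k+1) ω = 1}).indicator (fun _ => (1 : ℝ)) | F k] =ᵐ[P] fun _ => 1 / 2) ∧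
      (P[({ω | η (k+1) ω = -1}).indicator (fun _ => (1 : ℝ)) | F k] =ᵐ[P] fun _ => 1 / 2) := by
    intro k
    have := hhalf (k+1) (by omega)
    simpa only [Nat.add_sub_cancel] using this
  -- ALPHA part
  have halpha : P {ω | alphaProc ξ η n ω ≠ ⊤ ∧ ξ (alphaProc ξ η n ω).toNat ω = 1}
        = 2⁻¹ * P {ω | alphaProc ξ η n ω ≠ ⊤} ∧
      P {ω | alphaProc ξ η n ω ≠ ⊤ ∧ ξ (alphaProc ξ η n ω).toNat ω = -1}
        = 2⁻¹ * P {ω | alphaProc ξ η n ω ≠ ⊤} := by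
    have hset : ∀ k : ℕ, {ω | alphaProc ξ η n ω = ((k+1 : ℕ) : ℕ∞)}
        = {ω | Tproc ξ η k ω = n - 1} ∩ {ω | ξ (k+1) ω = η (k+1) ω} := by
      intro k
      ext ω
      rw [mem_setOf_eq, alpha_eq_succ_iff hn]
      exact Iff.rfl
    have hBmeas : ∀ k : ℕ, MeasurableSet[F k] {ω | Tproc ξ η k ω = n - 1} :=
      fun k => Tproc_measurable F hξm hηm k (measurableSet_singleton (n-1))
    have hτmeas : ∀ k : ℕ, MeasurableSet {ω | alphaProc ξ η n ω = (k : ℕ∞)} := by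
      intro k
      rcases Nat.eq_zero_or_pos k with rfl | hk
      · have : {ω | alphaProc ξ η n ω = ((0:ℕ) : ℕ∞)} = (∅ : Set Ω) := by
          ext ω; simp only [mem_setOf_eq, Set.mem_empty_iff_false, iff_false]
          exact alpha_ne_zero hn ω
        rw [this]; exact MeasurableSet.empty
      · obtain ⟨j, rfl⟩ := Nat.exists_eq_succ_of_ne_zero (by omega : k ≠ 0)
        rw [hset j]
        exact (F.le j _ (hBmeas j)).inter
          (measurableSet_eq_fun ((hξm (j+1) (by omega)).mono (F.le (j+1)) le_rfl)
            ((hηm (j+1) (by omega)).mono (F.le (j+1)) le_rfl))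
    have hsym : ∀ k : ℕ,
        P ({ω | alphaProc ξ η n ω = ((k+1 : ℕ) : ℕ∞)} ∩ {ω | ξ (k+1) ω = 1})
        = P ({ω | alphaProc ξ η n ω = ((k+1 : ℕ) : ℕ∞)} ∩ {ω | ξ (k+1) ω = -1}) := by
      intro k
      have hpos : {ω | alphaProc ξ η n ω = ((k+1 : ℕ) : ℕ∞)} ∩ {ω | ξ (k+1) ω = 1}
          = {ω | Tproc ξ η k ω = n - 1} ∩ {ω | ξ (k+1) ω = 1} ∩ {ω | η (k+1) ω = 1} := by
        rw [hset k]
        ext ω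
        simp only [mem_inter_iff, mem_setOf_eq]
        constructor
        · rintro ⟨⟨hB, hC⟩, h1⟩
          exact ⟨⟨hB, h1⟩, by rw [← hC]; exact h1⟩
        · rintro ⟨⟨hB, h1⟩, h2⟩
          exact ⟨⟨hB, by rw [h1, h2]⟩, h1⟩
      have hneg : {ω | alphaProc ξ η n ω = ((k+1 : ℕ) : ℕ∞)} ∩ {ω | ξ (k+1) ω = -1}
          = {ω | Tproc ξ η k ω = n - 1} ∩ {ω | ξ (k+1) ω = -1} ∩ {ω | η (k+1) ω = -1} := by
        rw [hset k]
        ext ω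
        simp only [mem_inter_iff, mem_setOf_eq]
        constructor
        · rintro ⟨⟨hB, hC⟩, h1⟩
          exact ⟨⟨hB, h1⟩, by rw [← hC]; exact h1⟩
        · rintro ⟨⟨hB, h1⟩, h2⟩
          exact ⟨⟨hB, by rw [h1, h2]⟩, h1⟩
      rw [hpos, hneg]
      exact sym_agree P (F.le k) (hBmeas k) (hξv (k+1)) (hηv (k+1))
        (fun c => hξset (k+1) c (by omega)) (fun c => hηset (k+1) c (by omega))
        (hhalf' k).1 (hhalf' k).2.2.2
    exact assemble P (alphaProc ξ η n) ξ (fun ω => alpha_ne_zero hn ω) hτmeas hξv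
      (fun k c => hξset (k+1) c (by omega)) hsym
  -- BETA part
  have hbeta : P {ω | betaProc ξ η n ω ≠ ⊤ ∧ ξ (betaProc ξ η n ω).toNat ω = 1}
        = 2⁻¹ * P {ω | betaProc ξ η n ω ≠ ⊤} ∧
      P {ω | betaProc ξ η n ω ≠ ⊤ ∧ ξ (betaProc ξ η n ω).toNat ω = -1}
        = 2⁻¹ * P {ω | betaProc ξ η n ω ≠ ⊤} := by
    have hset : ∀ k : ℕ, {ω | betaProc ξ η n ω = ((k+1 : ℕ) : ℕ∞)}
        = {ω | Sproc ξ η k ω = n - 1} ∩ {ω | ξ (k+1) ω ≠ η (k+1) ω} := by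
      intro k
      ext ω
      rw [mem_setOf_eq, beta_eq_succ_iff hn]
      exact Iff.rfl
    have hBmeas : ∀ k : ℕ, MeasurableSet[F k] {ω | Sproc ξ η k ω = n - 1} := by
      intro k
      have h1 : {ω | Sproc ξ η k ω = n - 1}
          = (fun ω => Tproc ξ η k ω) ⁻¹' {j | k - j = n - 1} := by
        ext ω; simp [Sproc]
      rw [h1]
      exact Tproc_measurable F hξm hηm k (by trivial)
    have hτmeas : ∀ k : ℕ, MeasurableSet {ω | betaProc ξ η n ω = (k : ℕ∞)} := by
      intro k
      rcases Nat.eq_zero_or_pos k with rfl | hk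
      · have : {ω | betaProc ξ η n ω = ((0:ℕ) : ℕ∞)} = (∅ : Set Ω) := by
          ext ω; simp only [mem_setOf_eq, Set.mem_empty_iff_false, iff_false]
          exact beta_ne_zero hn ω
        rw [this]; exact MeasurableSet.empty
      · obtain ⟨j, rfl⟩ := Nat.exists_eq_succ_of_ne_zero (by omega : k ≠ 0)
        rw [hset j]
        refine (F.le j _ (hBmeas j)).inter ?_
        have : MeasurableSet {ω | ξ (j+1) ω = η (j+1) ω} :=
          measurableSet_eq_fun ((hξm (j+1) (by omega)).mono (F.le (j+1)) le_rfl)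
            ((hηm (j+1) (by omega)).mono (F.le (j+1)) le_rfl)
        exact this.compl
    have hsym : ∀ k : ℕ,
        P ({ω | betaProc ξ η n ω = ((k+1 : ℕ) : ℕ∞)} ∩ {ω | ξ (k+1) ω = 1})
        = P ({ω | betaProc ξ η n ω = ((k+1 : ℕ) : ℕ∞)} ∩ {ω | ξ (k+1) ω = -1}) := by
      intro k
      have hpos : {ω | betaProc ξ η n ω = ((k+1 : ℕ) : ℕ∞)} ∩ {ω | ξ (k+1) ω = 1}
          = {ω | Sproc ξ η k ω = n - 1} ∩ {ω | ξ (k+1) ω = 1} ∩ {ω | η (k+1) ω = -1} := by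
        rw [hset k]
        ext ω
        simp only [mem_inter_iff, mem_setOf_eq]
        constructor
        · rintro ⟨⟨hB, hC⟩, h1⟩
          refine ⟨⟨hB, h1⟩, ?_⟩
          rcases hηv (k+1) ω with h | h
          · exact absurd (h1.trans h.symm) hC
          · exact h
        · rintro ⟨⟨hB, h1⟩, h2⟩
          exact ⟨⟨hB, by rw [h1, h2]; norm_num⟩, h1⟩
      have hneg : {ω | betaProc ξ η n ω = ((k+1 : ℕ) : ℕ∞)} ∩ {ω | ξ (k+1) ω = -1}
          = {ω | Sproc ξ η k ω = n - 1} ∩ {ω | ξ (k+1) ω = -1} ∩ {ω | η (k+1) ω = 1} := by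
        rw [hset k]
        ext ω
        simp only [mem_inter_iff, mem_setOf_eq]
        constructor
        · rintro ⟨⟨hB, hC⟩, h1⟩
          refine ⟨⟨hB, h1⟩, ?_⟩
          rcases hηv (k+1) ω with h | h
          · exact h
          · exact absurd (h1.trans h.symm) hC
        · rintro ⟨⟨hB, h1⟩, h2⟩
          exact ⟨⟨hB, by rw [h1, h2]; norm_num⟩, h1⟩
      rw [hpos, hneg]
      exact sym_disagree P (F.le k) (hBmeas k) (hξv (k+1)) (hηv (k+1))
        (fun c => hξset (k+1) c (by omega)) (fun c => hηset (k+1) c (by omega))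
        (hhalf' k).1 (hhalf' k).2.2.1
    exact assemble P (betaProc ξ η n) ξ (fun ω => beta_ne_zero hn ω) hτmeas hξv
      (fun k c => hξset (k+1) c (by omega)) hsym
  exact ⟨halpha.1, halpha.2, hbeta.1, hbeta.2⟩
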